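/- Let M = [[A, B],[Bᵀ, D]] be symmetric with the m-th largest eigenvalue λ_m(M) satisfying λ_m(M) > ρ(D), and let u_1,…,u_m be orthonormal eigenvectors for the m largest eigenvalues, partitioned as u_i = (u_{i,1}, u_{i,2}). If additionally (λ_m(M) − ρ(D)) > 0 and ‖B‖ < s, then ‖u_{i,2}‖₂ < s/(λ_m(M) − ρ(D)) for every i ≤ m, and hence ‖U₂‖_F < √m · s/(λ_m(M) − ρ(D)) where U₂ = [u_{1,2} … u_{m,2}]. -/

import Mathlib

open Matrix

/-- Spectral radius of a real symmetric matrix: the largest absolute value of an eigenvalue. -/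
noncomputable def specRad {ι : Type*} [Fintype ι] [DecidableEq ι]
    {D : Matrix ι ι ℝ} (hD : D.IsHermitian) : ℝ :=
  ⨆ i, |hD.eigenvalues i|

/-- Euclidean (ℓ²) norm of a real vector. -/
noncomputable def vecNorm {ι : Type*} [Fintype ι] (v : ι → ℝ) : ℝ :=
  Real.sqrt (∑ i, (v i) ^ 2)

/-- Frobenius norm of a real matrix. -/
noncomputable def frob {ι κ : Type*} [Fintype ι] [Fintype κ] (A : Matrix ι κ ℝ) : ℝ :=
  Real.sqrt (∑ i, ∑ j, (A i j) ^ 2)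

/-- ℓ²→ℓ² operator norm (largest singular value) of a real matrix. -/
noncomputable def opNorm {ι κ : Type*} [Fintype ι] [Fintype κ] [DecidableEq ι] [DecidableEq κ]
    (A : Matrix κ ι ℝ) : ℝ :=
  ‖LinearMap.toContinuousLinearMap
      (Matrix.toLin (PiLp.basisFun 2 ℝ ι) (PiLp.basisFun 2 ℝ κ) A)‖

/-- The `j`-th largest eigenvalue (1-indexed, with multiplicity) of a real symmetric matrix. -/
noncomputable def kthLargestEig {ι : Type*} [Fintype ι] [DecidableEq ι]
    {M : Matrix ι ι ℝ} (hM : M.IsHermitian) (j : ℕ) : ℝ :=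
  (List.insertionSort (· ≥ ·) (Finset.univ.toList.map hM.eigenvalues)).getD (j - 1) 0

lemma norm_euc {ι : Type*} [Fintype ι] (v : EuclideanSpace ℝ ι) :
    ‖v‖ = Real.sqrt (∑ i, (v i) ^ 2) := by
  rw [EuclideanSpace.norm_eq]
  congr 1; apply Finset.sum_congr rfl; intro i _
  rw [Real.norm_eq_abs, sq_abs]

lemma opNorm_eq {ι κ : Type*} [Fintype ι] [Fintype κ] [DecidableEq ι] [DecidableEq κ]
    (A : Matrix κ ι ℝ) :
    opNorm A = ‖LinearMap.toContinuousLinearMap (Matrix.toEuclideanLin A)‖ := rfl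

lemma mulVec_norm_le {ι κ : Type*} [Fintype ι] [Fintype κ] [DecidableEq ι] [DecidableEq κ]
    (A : Matrix κ ι ℝ) (v : EuclideanSpace ℝ ι) :
    ‖Matrix.toEuclideanLin A v‖ ≤ opNorm A * ‖v‖ := by
  rw [opNorm_eq]
  have := (LinearMap.toContinuousLinearMap (Matrix.toEuclideanLin (𝕜 := ℝ) A)).le_opNorm v
  simpa using this

lemma opNorm_transpose {ι κ : Type*} [Fintype ι] [Fintype κ] [DecidableEq ι] [DecidableEq κ]
    (A : Matrix κ ι ℝ) : opNorm Aᵀ = opNorm A := by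
  rw [opNorm_eq, opNorm_eq]
  have hT : Aᵀ = Aᴴ := by ext i j; simp [Matrix.conjTranspose_apply]
  rw [hT, Matrix.toEuclideanLin_conjTranspose_eq_adjoint,
    LinearMap.adjoint_toContinuousLinearMap]
  exact ContinuousLinearMap.adjoint.norm_map _

lemma specRad_key {k : ℕ} {D : Matrix (Fin k) (Fin k) ℝ} (hD : D.IsHermitian) {t : ℝ}
    (ht : specRad hD ≤ t) (y : EuclideanSpace ℝ (Fin k)) :
    (t - specRad hD) * ‖y‖ ≤ ‖t • y - Matrix.toEuclideanLin D y‖ := by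
  set ρ := specRad hD with hρ
  set b := hD.eigenvectorBasis with hb
  set z : EuclideanSpace ℝ (Fin k) := t • y - Matrix.toEuclideanLin D y with hzdef
  have heigle : ∀ j, |hD.eigenvalues j| ≤ ρ := by
    intro j
    show _ ≤ ⨆ i, |hD.eigenvalues i|
    exact le_ciSup (Set.Finite.bddAbove (Set.finite_range fun i => |hD.eigenvalues i|)) j
  have hrepr : ∀ j, b.repr z j = (t - hD.eigenvalues j) * b.repr y j := by
    intro j
    have hbj : Matrix.toEuclideanLin D (b j) = hD.eigenvalues j • b j :=
      congrArg (WithLp.equiv 2 _).symm (hD.mulVec_eigenvectorBasis j)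
    have hsymm := (Matrix.isHermitian_iff_isSymmetric.1 hD) (b j) y
    have h1 : b.repr (Matrix.toEuclideanLin D y) j = hD.eigenvalues j * b.repr y j := by
      rw [b.repr_apply_apply, b.repr_apply_apply, ← hsymm, hbj, real_inner_smul_left]
    have h2 : b.repr z j = t * b.repr y j - b.repr (Matrix.toEuclideanLin D y) j := by
      rw [hzdef, map_sub, _root_.map_smul]
      simp [smul_eq_mul]
    rw [h2, h1]; ring
  have hnz : ‖z‖ ^ 2 = ∑ j, ((t - hD.eigenvalues j) * b.repr y j) ^ 2 := by
    rw [← b.repr.norm_map z, EuclideanSpace.norm_eq, Real.sq_sqrt (by positivity)]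
    exact Finset.sum_congr rfl fun j _ => by rw [Real.norm_eq_abs, sq_abs, hrepr j]
  have hny : ‖y‖ ^ 2 = ∑ j, (b.repr y j) ^ 2 := by
    rw [← b.repr.norm_map y, EuclideanSpace.norm_eq, Real.sq_sqrt (by positivity)]
    exact Finset.sum_congr rfl fun j _ => by rw [Real.norm_eq_abs, sq_abs]
  have hsq : ((t - ρ) * ‖y‖) ^ 2 ≤ ‖z‖ ^ 2 := by
    rw [mul_pow, hnz, hny, Finset.mul_sum]
    apply Finset.sum_le_sum
    intro j _
    rw [mul_pow]
    apply mul_le_mul_of_nonneg_right _ (sq_nonneg _)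
    apply pow_le_pow_left₀ (by linarith) _ 2
    have := (abs_le.1 (heigle j)).2
    linarith
  have h0 : 0 ≤ (t - ρ) * ‖y‖ := mul_nonneg (by linarith) (norm_nonneg _)
  calc (t - ρ) * ‖y‖ = Real.sqrt (((t - ρ) * ‖y‖) ^ 2) := (Real.sqrt_sq h0).symm
    _ ≤ Real.sqrt (‖z‖ ^ 2) := Real.sqrt_le_sqrt hsq
    _ = ‖z‖ := Real.sqrt_sq (norm_nonneg _)

/-- Let `M = [[A, B], [Bᵀ, D]]` be symmetric with `λ_m(M) > ρ(D)`, and let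
`u_1, …, u_m` be orthonormal eigenvectors for the `m` largest eigenvalues (so each eigenvalue
`μ i` is at least `λ_m(M)`), partitioned as `u_i = (u_{i,1}, u_{i,2})`. If `‖B‖ < s`, then
`‖u_{i,2}‖₂ < s / (λ_m(M) - ρ(D))` for every `i`, and hence
`‖U₂‖_F < √m · s / (λ_m(M) - ρ(D))` where `U₂ = [u_{1,2} … u_{m,2}]`. -/
theorem stmt12 {m k : ℕ} (hm : 0 < m) (s : ℝ)
    (A : Matrix (Fin m) (Fin m) ℝ) (B : Matrix (Fin m) (Fin k) ℝ)
    (D : Matrix (Fin k) (Fin k) ℝ) (hA : A.IsHermitian) (hD : D.IsHermitian)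
    (hM : (Matrix.fromBlocks A B Bᵀ D).IsHermitian)
    (u : Fin m → (Fin m ⊕ Fin k → ℝ)) (μ : Fin m → ℝ)
    (horth : ∀ i j, (∑ x, u i x * u j x) = if i = j then (1 : ℝ) else 0)
    (heig : ∀ i, (Matrix.fromBlocks A B Bᵀ D).mulVec (u i) = μ i • u i)
    (hμ : ∀ i, kthLargestEig hM m ≤ μ i)
    (hsep : specRad hD < kthLargestEig hM m)
    (hB : opNorm B < s) :
    (∀ i, vecNorm (fun j : Fin k => u i (Sum.inr j)) <
        s / (kthLargestEig hM m - specRad hD)) ∧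
      frob (Matrix.of fun (j : Fin k) (i : Fin m) => u i (Sum.inr j)) <
        Real.sqrt m * s / (kthLargestEig hM m - specRad hD) := by
  set lam := kthLargestEig hM m with hlam
  set ρ := specRad hD with hρ
  have ht : 0 < lam - ρ := by linarith
  have hBnn : 0 ≤ opNorm B := norm_nonneg _
  have hmain : ∀ i, vecNorm (fun j : Fin k => u i (Sum.inr j)) < s / (lam - ρ) := by
    intro i
    set x : EuclideanSpace ℝ (Fin m) :=
      (WithLp.equiv 2 (Fin m → ℝ)).symm (fun j => u i (Sum.inl j)) with hx
    set y : EuclideanSpace ℝ (Fin k) :=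
      (WithLp.equiv 2 (Fin k → ℝ)).symm (fun j => u i (Sum.inr j)) with hy
    -- the eigen-equation on the bottom block
    have hblock : μ i • y - Matrix.toEuclideanLin D y = Matrix.toEuclideanLin Bᵀ x := by
      have he := heig i
      rw [Matrix.fromBlocks_mulVec] at he
      ext j
      have hj := congrFun he (Sum.inr j)
      simp only [Sum.elim_inr, Pi.add_apply, Pi.smul_apply, smul_eq_mul] at hj
      show μ i * (u i (Sum.inr j)) - D.mulVec (fun l => u i (Sum.inr l)) j
          = Bᵀ.mulVec (fun l => u i (Sum.inl l)) j
      have : (u i ∘ Sum.inl) = fun l => u i (Sum.inl l) := rfl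
      have h2 : (u i ∘ Sum.inr) = fun l => u i (Sum.inr l) := rfl
      rw [this, h2] at hj
      linarith
    -- norm of x is at most 1
    have hxle : ‖x‖ ≤ 1 := by
      have h11 := horth i i
      simp only [if_pos rfl, if_true] at h11
      rw [Fintype.sum_sum_type] at h11
      have hsum : ∑ j, (u i (Sum.inl j)) ^ 2 ≤ 1 := by
        have h1 : ∀ σ : Fin k, 0 ≤ u i (Sum.inr σ) * u i (Sum.inr σ) := fun σ => mul_self_nonneg _
        have h2 : 0 ≤ ∑ σ : Fin k, u i (Sum.inr σ) * u i (Sum.inr σ) :=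
          Finset.sum_nonneg fun σ _ => h1 σ
        calc ∑ j, (u i (Sum.inl j)) ^ 2 = ∑ j, u i (Sum.inl j) * u i (Sum.inl j) := by
              simp [sq]
          _ ≤ 1 := by linarith
      rw [norm_euc]
      have : (∑ j, (x j) ^ 2) = ∑ j, (u i (Sum.inl j)) ^ 2 := rfl
      rw [this]
      exact Real.sqrt_le_one.mpr hsum
    have hchain : (μ i - ρ) * ‖y‖ ≤ opNorm B * ‖x‖ := by
      calc (μ i - ρ) * ‖y‖ ≤ ‖μ i • y - Matrix.toEuclideanLin D y‖ :=
            specRad_key hD (by have := hμ i; linarith) y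
        _ = ‖Matrix.toEuclideanLin Bᵀ x‖ := by rw [hblock]
        _ ≤ opNorm Bᵀ * ‖x‖ := mulVec_norm_le _ _
        _ = opNorm B * ‖x‖ := by rw [opNorm_transpose]
    have hfin : (lam - ρ) * ‖y‖ < s := by
      have h1 : (lam - ρ) * ‖y‖ ≤ (μ i - ρ) * ‖y‖ :=
        mul_le_mul_of_nonneg_right (by have := hμ i; linarith) (norm_nonneg _)
      have h2 : opNorm B * ‖x‖ ≤ opNorm B := by
        calc opNorm B * ‖x‖ ≤ opNorm B * 1 :=
              mul_le_mul_of_nonneg_left hxle hBnn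
          _ = opNorm B := mul_one _
      linarith
    have hvy : vecNorm (fun j : Fin k => u i (Sum.inr j)) = ‖y‖ := by
      rw [norm_euc]; rfl
    rw [hvy, lt_div_iff₀ ht]
    linarith [hfin]
  refine ⟨hmain, ?_⟩
  -- Frobenius part
  haveI : Nonempty (Fin m) := ⟨⟨0, hm⟩⟩
  set c := s / (lam - ρ) with hc
  have hc0 : 0 < c := lt_of_le_of_lt (Real.sqrt_nonneg _) (hmain ⟨0, hm⟩)
  have hsumlt : ∀ i, (∑ j, (u i (Sum.inr j)) ^ 2) < c ^ 2 := by
    intro i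
    have h := hmain i
    have hnn : 0 ≤ ∑ j, (u i (Sum.inr j)) ^ 2 := Finset.sum_nonneg fun j _ => sq_nonneg _
    have : (∑ j, (u i (Sum.inr j)) ^ 2) = (vecNorm (fun j : Fin k => u i (Sum.inr j))) ^ 2 :=
      (Real.sq_sqrt hnn).symm
    rw [this]
    exact pow_lt_pow_left₀ h (Real.sqrt_nonneg _) (by norm_num)
  have hfr : frob (Matrix.of fun (j : Fin k) (i : Fin m) => u i (Sum.inr j))
      = Real.sqrt (∑ i : Fin m, ∑ j : Fin k, (u i (Sum.inr j)) ^ 2) := by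
    rw [frob]
    congr 1
    rw [Finset.sum_comm]
    simp [Matrix.of_apply]
  rw [hfr]
  have hlt : (∑ i : Fin m, ∑ j : Fin k, (u i (Sum.inr j)) ^ 2) < (m : ℝ) * c ^ 2 := by
    calc (∑ i : Fin m, ∑ j : Fin k, (u i (Sum.inr j)) ^ 2)
        < ∑ _i : Fin m, c ^ 2 :=
          Finset.sum_lt_sum_of_nonempty Finset.univ_nonempty fun i _ => hsumlt i
      _ = (m : ℝ) * c ^ 2 := by simp [Finset.sum_const, Finset.card_univ, nsmul_eq_mul]
  calc Real.sqrt (∑ i : Fin m, ∑ j : Fin k, (u i (Sum.inr j)) ^ 2)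
      < Real.sqrt ((m : ℝ) * c ^ 2) := by
        apply Real.sqrt_lt_sqrt (Finset.sum_nonneg fun i _ =>
          Finset.sum_nonneg fun j _ => sq_nonneg _) hlt
    _ = Real.sqrt m * c := by
        rw [Real.sqrt_mul (Nat.cast_nonneg m), Real.sqrt_sq hc0.le]
    _ = Real.sqrt m * s / (lam - ρ) := by
        rw [hc, mul_div_assoc]
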